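/- Classical Pieri rule for e_m: if (μ) is a partition of length at most N and 0 ≤ m ≤ N, then in the ring of symmetric polynomials in N variables, S_{(μ)} · e_m = Σ S_{(ν)}, where the sum runs over all partitions (ν) of length at most N such that the skew shape (ν)/(μ) is a vertical m-strip (m boxes, at most one per row). -/

import Mathlib

open MvPolynomial Finset

noncomputable def eE (N : ℕ) (s : Finset (Fin N)) (z : ℤ) : MvPolynomial (Fin N) ℚ :=
  if 0 ≤ z then ∑ t ∈ s.powersetCard z.toNat, ∏ i ∈ t, X i else 0

noncomputable def hH (N : ℕ) (s : Finset (Fin N)) (z : ℤ) : MvPolynomial (Fin N) ℚ :=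
  if 0 ≤ z then ∑ m ∈ s.sym z.toNat, (m.1.map X).prod else 0

/-- The complete homogeneous symmetric polynomial `h_n` in `N` variables,
extended to integer indices by `h_n = 0` for `n < 0` (and `h_0 = 1`). -/
noncomputable def hInt (N : ℕ) (z : ℤ) : MvPolynomial (Fin N) ℚ :=
  if 0 ≤ z then hsymm (Fin N) ℚ z.toNat else 0

lemma eE_neg {N s} {z : ℤ} (h : z < 0) : eE N s z = 0 := by simp [eE, not_le.2 h]
lemma hH_neg {N s} {z : ℤ} (h : z < 0) : hH N s z = 0 := by simp [hH, not_le.2 h]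
lemma eE_zero {N s} : eE N s 0 = 1 := by simp [eE]
lemma hH_zero {N s} : hH N s 0 = 1 := by simp [hH, Sym.eq_nil_of_card_zero]

lemma hH_univ (N : ℕ) (z : ℤ) : hH N Finset.univ z = hInt N z := by
  unfold hH hInt
  split
  · rw [hsymm, ← Finset.sym_univ]
  · rfl

lemma eE_univ (N : ℕ) (n : ℕ) : eE N Finset.univ (n : ℤ) = esymm (Fin N) ℚ n := by
  simp [eE, esymm]

lemma eE_card_lt {N : ℕ} {s : Finset (Fin N)} {z : ℤ} (h : (s.card : ℤ) < z) :
    eE N s z = 0 := by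
  unfold eE
  split
  · rename_i hz
    rw [Finset.powersetCard_eq_empty.2 (by omega), Finset.sum_empty]
  · rfl

lemma eE_insert {N} {k : Fin N} {s : Finset (Fin N)} (hk : k ∉ s) (z : ℤ) :
    eE N (insert k s) z = eE N s z + X k * eE N s (z - 1) := by
  rcases lt_trichotomy z 0 with h | rfl | h
  · rw [eE_neg h, eE_neg h, eE_neg (by omega), mul_zero, add_zero]
  · rw [eE_zero, eE_zero, eE_neg (by norm_num), mul_zero, add_zero]
  · obtain ⟨n, rfl⟩ : ∃ n : ℕ, z = (n : ℤ) + 1 := ⟨(z - 1).toNat, by omega⟩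
    unfold eE
    rw [if_pos (by omega), if_pos (by omega), if_pos (by omega)]
    rw [show ((n : ℤ) + 1).toNat = n + 1 by omega, show ((n : ℤ) + 1 - 1).toNat = n by omega]
    have hdisj : Disjoint (s.powersetCard (n + 1))
        ((s.powersetCard n).image (insert k)) := by
      rw [Finset.disjoint_left]
      intro t ht ht'
      rw [Finset.mem_powersetCard] at ht
      rw [Finset.mem_image] at ht'
      obtain ⟨u, _, rfl⟩ := ht'
      exact hk (ht.1 (Finset.mem_insert_self k u))
    rw [Finset.powersetCard_succ_insert hk, Finset.sum_union hdisj, Finset.sum_image ?inj]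
    case inj =>
      intro x hx y hy hxy
      rw [Finset.mem_coe, Finset.mem_powersetCard] at hx hy
      have hkx : k ∉ x := fun h => hk (hx.1 h)
      have hky : k ∉ y := fun h => hk (hy.1 h)
      rw [← Finset.erase_insert hkx, hxy, Finset.erase_insert hky]
    congr 1
    rw [Finset.mul_sum]
    refine Finset.sum_congr rfl fun t ht => ?_
    rw [Finset.mem_powersetCard] at ht
    exact Finset.prod_insert fun h => hk (ht.1 h)

lemma hH_insert {N} {k : Fin N} {s : Finset (Fin N)} (hk : k ∉ s) (z : ℤ) :
    hH N (insert k s) z = hH N s z + X k * hH N (insert k s) (z - 1) := by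
  rcases lt_trichotomy z 0 with h | rfl | h
  · rw [hH_neg h, hH_neg h, hH_neg (by omega), mul_zero, add_zero]
  · rw [hH_zero, hH_zero, hH_neg (by norm_num), mul_zero, add_zero]
  · obtain ⟨n, rfl⟩ : ∃ n : ℕ, z = (n : ℤ) + 1 := ⟨(z - 1).toNat, by omega⟩
    unfold hH
    rw [if_pos (by omega), if_pos (by omega), if_pos (by omega)]
    rw [show ((n : ℤ) + 1).toNat = n + 1 by omega, show ((n : ℤ) + 1 - 1).toNat = n by omega]
    rw [← Finset.sum_filter_add_sum_filter_not ((insert k s).sym (n + 1)) (fun m => k ∈ m)]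
    have h1 : ((insert k s).sym (n + 1)).filter (fun m => ¬ k ∈ m) = s.sym (n + 1) := by
      ext m
      simp only [Finset.mem_filter, Finset.mem_sym_iff, Finset.mem_insert]
      constructor
      · rintro ⟨h1, h2⟩ a ha
        rcases h1 a ha with rfl | h
        · exact absurd ha h2
        · exact h
      · intro h
        exact ⟨fun a ha => Or.inr (h a ha), fun hkm => hk (h k hkm)⟩
    have h2 : ((insert k s).sym (n + 1)).filter (fun m => k ∈ m) =
        ((insert k s).sym n).image (Sym.cons k) := by
      ext m
      simp only [Finset.mem_filter, Finset.mem_image, Finset.mem_sym_iff]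
      constructor
      · rintro ⟨h1, h2⟩
        obtain ⟨t, rfl⟩ := Sym.exists_cons_of_mem h2
        exact ⟨t, fun a ha => h1 a (Sym.mem_cons_of_mem ha), rfl⟩
      · rintro ⟨t, ht, rfl⟩
        refine ⟨fun a ha => ?_, Sym.mem_cons_self k t⟩
        rcases Sym.mem_cons.1 ha with h' | h'
        · rw [h']; exact Finset.mem_insert_self _ _
        · exact ht a h'
    have hinj : ∀ x ∈ (insert k s).sym n, ∀ y ∈ (insert k s).sym n,
        Sym.cons k x = Sym.cons k y → x = y :=
      fun x _ y _ hxy => (Sym.cons_inj_right k x y).1 hxy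
    rw [h1, h2, Finset.sum_image hinj]
    rw [add_comm, Finset.mul_sum]
    congr 1
    refine Finset.sum_congr rfl fun t _ => ?_
    have hc : ((Sym.cons k t).1 : Multiset (Fin N)) = k ::ₘ t.1 := rfl
    rw [hc, Multiset.map_cons, Multiset.prod_cons]

lemma hInt_neg {N : ℕ} {z : ℤ} (h : z < 0) : hInt N z = 0 := by simp [hInt, not_le.2 h]

lemma hH_empty {N : ℕ} {z : ℤ} (h : z ≠ 0) : hH N ∅ z = 0 := by
  rcases lt_trichotomy z 0 with h' | rfl | h'
  · exact hH_neg h'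
  · exact absurd rfl h
  · obtain ⟨n, rfl⟩ : ∃ n : ℕ, z = (n : ℤ) + 1 := ⟨(z - 1).toNat, by omega⟩
    unfold hH
    rw [if_pos (by omega), show ((n : ℤ) + 1).toNat = n + 1 by omega,
      Finset.sym_empty, Finset.sum_empty]

lemma aux_A {N : ℕ} {k : Fin N} {s : Finset (Fin N)} (hk : k ∉ s)
    (hG : ∀ n : ℕ, ∑ r ∈ Finset.range (n + 1),
        (-1 : MvPolynomial (Fin N) ℚ) ^ r * eE N s r * hH N s ((n : ℤ) - r) =
      if n = 0 then 1 else 0) :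
    ∀ n : ℕ, ∑ r ∈ Finset.range (n + 1),
        (-1 : MvPolynomial (Fin N) ℚ) ^ r * eE N s r * hH N (insert k s) ((n : ℤ) - r) =
      X k ^ n := by
  intro n
  induction n with
  | zero => simp [eE_zero, hH_zero]
  | succ n ihn =>
    have hsplit : ∀ r : ℕ, (-1 : MvPolynomial (Fin N) ℚ) ^ r * eE N s r *
          hH N (insert k s) (((n + 1 : ℕ) : ℤ) - r)
        = (-1) ^ r * eE N s r * hH N s (((n + 1 : ℕ) : ℤ) - r)
          + X k * ((-1) ^ r * eE N s r * hH N (insert k s) ((n : ℤ) - r)) := by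
      intro r
      rw [hH_insert hk, show (((n + 1 : ℕ) : ℤ) - r - 1) = (n : ℤ) - r by push_cast; ring]
      ring
    rw [Finset.sum_congr rfl fun r _ => hsplit r, Finset.sum_add_distrib, ← Finset.mul_sum]
    rw [hG (n + 1), if_neg (Nat.succ_ne_zero n)]
    rw [Finset.sum_range_succ, show ((n : ℤ) - ((n + 1 : ℕ) : ℤ)) = -1 by push_cast; ring,
      hH_neg (by norm_num), mul_zero, add_zero, ihn]
    rw [zero_add, pow_succ]
    ring

lemma eh_rel (N : ℕ) (s : Finset (Fin N)) :
    ∀ n : ℕ, ∑ r ∈ Finset.range (n + 1),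
        (-1 : MvPolynomial (Fin N) ℚ) ^ r * eE N s r * hH N s ((n : ℤ) - r) =
      if n = 0 then 1 else 0 := by
  induction s using Finset.induction_on with
  | empty =>
    intro n
    rcases Nat.eq_zero_or_pos n with rfl | hn
    · simp [eE_zero, hH_zero]
    · rw [if_neg hn.ne']
      refine Finset.sum_eq_zero fun r hr => ?_
      rcases Nat.eq_zero_or_pos r with rfl | hr'
      · rw [hH_empty (by omega), mul_zero]
      · rw [eE_card_lt (by simp; omega), mul_zero, zero_mul]
  | @insert k s hk ih =>
    intro n
    have hA := aux_A hk ih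
    have hsplit : ∀ r : ℕ, (-1 : MvPolynomial (Fin N) ℚ) ^ r * eE N (insert k s) r *
          hH N (insert k s) ((n : ℤ) - r)
        = (-1) ^ r * eE N s r * hH N (insert k s) ((n : ℤ) - r)
          + X k * ((-1) ^ r * eE N s ((r : ℤ) - 1) * hH N (insert k s) ((n : ℤ) - r)) := by
      intro r
      rw [eE_insert hk]
      ring
    rw [Finset.sum_congr rfl fun r _ => hsplit r, Finset.sum_add_distrib, ← Finset.mul_sum,
      hA n]
    rcases n with _ | m
    · rw [if_pos rfl]
      rw [Finset.sum_range_one, eE_neg (by norm_num), mul_zero, zero_mul, mul_zero, add_zero,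
        pow_zero]
    · rw [if_neg (Nat.succ_ne_zero m)]
      rw [Finset.sum_range_succ']
      rw [show ((0 : ℕ) : ℤ) - 1 = -1 by norm_num, eE_neg (by norm_num), mul_zero, zero_mul,
        add_zero]
      have : ∀ t : ℕ, (-1 : MvPolynomial (Fin N) ℚ) ^ (t + 1) * eE N s (((t + 1 : ℕ) : ℤ) - 1) *
            hH N (insert k s) (((m + 1 : ℕ) : ℤ) - ((t + 1 : ℕ) : ℤ))
          = -((-1) ^ t * eE N s t * hH N (insert k s) ((m : ℤ) - t)) := by
        intro t
        rw [show (((t + 1 : ℕ) : ℤ) - 1) = (t : ℤ) by push_cast; ring,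
          show (((m + 1 : ℕ) : ℤ) - ((t + 1 : ℕ) : ℤ)) = (m : ℤ) - t by push_cast; ring]
        ring
      rw [Finset.sum_congr rfl fun t _ => this t, Finset.sum_neg_distrib, hA m]
      rw [pow_succ]
      ring

lemma key_rel (N : ℕ) (k : Fin N) (n : ℕ) :
    ∑ r ∈ Finset.range N,
        (-1 : MvPolynomial (Fin N) ℚ) ^ r * eE N (Finset.univ.erase k) r * hInt N ((n : ℤ) - r) =
      X k ^ n := by
  have hA := aux_A (Finset.notMem_erase k Finset.univ) (eh_rel N (Finset.univ.erase k)) n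
  rw [Finset.insert_erase (Finset.mem_univ k)] at hA
  rw [Finset.sum_congr rfl fun r _ => by rw [hH_univ]] at hA
  have hNpos : 0 < N := k.pos
  have hcard : (Finset.univ.erase k).card = N - 1 := by
    rw [Finset.card_erase_of_mem (Finset.mem_univ k), Finset.card_univ, Fintype.card_fin]
  have h1 : ∑ r ∈ Finset.range N,
        (-1 : MvPolynomial (Fin N) ℚ) ^ r * eE N (Finset.univ.erase k) r * hInt N ((n : ℤ) - r)
      = ∑ r ∈ Finset.range (max N (n + 1)),
        (-1 : MvPolynomial (Fin N) ℚ) ^ r * eE N (Finset.univ.erase k) r * hInt N ((n : ℤ) - r) := by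
    refine Finset.sum_subset (Finset.range_subset_range.2 (le_max_left _ _)) fun x hx hnx => ?_
    rw [Finset.mem_range] at hx hnx
    rw [eE_card_lt (by rw [hcard]; push_cast; omega), mul_zero, zero_mul]
  have h2 : ∑ r ∈ Finset.range (n + 1),
        (-1 : MvPolynomial (Fin N) ℚ) ^ r * eE N (Finset.univ.erase k) r * hInt N ((n : ℤ) - r)
      = ∑ r ∈ Finset.range (max N (n + 1)),
        (-1 : MvPolynomial (Fin N) ℚ) ^ r * eE N (Finset.univ.erase k) r * hInt N ((n : ℤ) - r) := by
    refine Finset.sum_subset (Finset.range_subset_range.2 (le_max_right _ _)) fun x hx hnx => ?_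
    rw [Finset.mem_range] at hx hnx
    rw [hInt_neg (by push_cast; omega), mul_zero]
  rw [h1, ← h2, hA]

/-- The Schur polynomial of a partition `μ` with at most `N` parts, defined by
the Jacobi–Trudi determinant `S_μ = det(h_{μ_i - i + j})`. -/
noncomputable def schur (N : ℕ) (μ : Fin N → ℕ) : MvPolynomial (Fin N) ℚ :=
  (Matrix.of fun i j : Fin N => hInt N ((μ i : ℤ) - (i : ℕ) + (j : ℕ))).det

noncomputable def Pmat (N : ℕ) (ν : Fin N → ℕ) :
    Matrix (Fin N) (Fin N) (MvPolynomial (Fin N) ℚ) :=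
  Matrix.of fun i k => X k ^ (ν i + (N - 1 - (i : ℕ)))

noncomputable def Mmat (N : ℕ) : Matrix (Fin N) (Fin N) (MvPolynomial (Fin N) ℚ) :=
  Matrix.of fun j k =>
    (-1) ^ (N - 1 - (j : ℕ)) * eE N (Finset.univ.erase k) ((N : ℤ) - 1 - (j : ℕ))

lemma HM_eq (N : ℕ) (μ : Fin N → ℕ) :
    (Matrix.of fun i j : Fin N => hInt N ((μ i : ℤ) - (i : ℕ) + (j : ℕ))) * Mmat N
      = Pmat N μ := by
  refine Matrix.ext fun i k => ?_
  rw [Matrix.mul_apply]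
  simp only [Matrix.of_apply, Mmat, Pmat]
  rw [← Equiv.sum_comp (Fin.revPerm) fun j =>
    hInt N ((μ i : ℤ) - (i : ℕ) + (j : ℕ)) *
      ((-1) ^ (N - 1 - (j : ℕ)) * eE N (Finset.univ.erase k) ((N : ℤ) - 1 - (j : ℕ)))]
  have hterm : ∀ j : Fin N,
      hInt N ((μ i : ℤ) - (i : ℕ) + ((Fin.revPerm j : Fin N) : ℕ)) *
        ((-1) ^ (N - 1 - ((Fin.revPerm j : Fin N) : ℕ)) *
          eE N (Finset.univ.erase k) ((N : ℤ) - 1 - ((Fin.revPerm j : Fin N) : ℕ)))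
      = (-1) ^ (j : ℕ) * eE N (Finset.univ.erase k) (j : ℕ) *
          hInt N (((μ i + (N - 1 - (i : ℕ)) : ℕ) : ℤ) - (j : ℕ)) := by
    intro j
    have hi := i.isLt
    have hj := j.isLt
    have hrev : ((Fin.revPerm j : Fin N) : ℕ) = N - 1 - (j : ℕ) := by
      show (Fin.rev j : ℕ) = N - 1 - (j : ℕ)
      rw [Fin.val_rev]
      omega
    rw [hrev]
    rw [show (N - 1 - (N - 1 - (j : ℕ))) = (j : ℕ) by omega]
    rw [show ((N : ℤ) - 1 - ((N - 1 - (j : ℕ) : ℕ) : ℤ)) = ((j : ℕ) : ℤ) by push_cast; omega]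
    rw [show ((μ i : ℤ) - (i : ℕ) + ((N - 1 - (j : ℕ) : ℕ) : ℤ))
        = (((μ i + (N - 1 - (i : ℕ)) : ℕ) : ℤ) - (j : ℕ)) by push_cast; omega]
    ring
  rw [Finset.sum_congr rfl fun j _ => hterm j]
  rw [Fin.sum_univ_eq_sum_range fun r =>
    (-1) ^ r * eE N (Finset.univ.erase k) r *
      hInt N (((μ i + (N - 1 - (i : ℕ)) : ℕ) : ℤ) - r)]
  exact key_rel N k (μ i + (N - 1 - (i : ℕ)))

lemma det_step (N : ℕ) (μ : Fin N → ℕ) :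
    schur N μ * (Mmat N).det = (Pmat N μ).det := by
  rw [schur, ← Matrix.det_mul, HM_eq]

lemma schur_zero_eq_one (N : ℕ) : schur N (fun _ => 0) = 1 := by
  rw [schur, Matrix.det_of_upperTriangular]
  · rw [Finset.prod_congr rfl fun i _ => show (Matrix.of fun i j : Fin N =>
        hInt N (((0 : ℕ) : ℤ) - (i : ℕ) + (j : ℕ))) i i = 1 by
      simp [hInt, hsymm_zero]]
    exact Finset.prod_const_one
  · intro i j hij
    have h' : (j : ℕ) < (i : ℕ) := hij
    simp only [Matrix.of_apply]
    refine hInt_neg ?_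
    push_cast
    omega

lemma det_Mmat_eq (N : ℕ) : (Mmat N).det = (Pmat N (fun _ => 0)).det := by
  have h := det_step N (fun _ => 0)
  rwa [schur_zero_eq_one, one_mul] at h

lemma detV_ne_zero (N : ℕ) : (Pmat N (fun _ => 0)).det ≠ 0 := by
  have h1 : (Pmat N (fun _ => 0)).transpose
      = (Matrix.vandermonde fun i : Fin N => (X i : MvPolynomial (Fin N) ℚ)).submatrix
          id Fin.revPerm := by
    refine Matrix.ext fun k i => ?_
    show (X k : MvPolynomial (Fin N) ℚ) ^ (0 + (N - 1 - (i : ℕ))) = X k ^ ((Fin.rev i : Fin N) : ℕ)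
    congr 1
    rw [Fin.val_rev]
    have := i.isLt
    omega
  have h2 : (Matrix.vandermonde fun i : Fin N => (X i : MvPolynomial (Fin N) ℚ)).det ≠ 0 := by
    rw [Matrix.det_vandermonde]
    refine Finset.prod_ne_zero_iff.2 fun i _ => Finset.prod_ne_zero_iff.2 fun j hj => ?_
    rw [Finset.mem_Ioi] at hj
    exact sub_ne_zero_of_ne (X_injective.ne hj.ne')
  rw [← Matrix.det_transpose, h1, Matrix.det_permute']
  intro h
  rcases mul_eq_zero.1 h with h' | h'
  · have : ((Equiv.Perm.sign (Fin.revPerm (n := N)) : ℤ) : MvPolynomial (Fin N) ℚ) ≠ 0 :=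
      Int.cast_ne_zero.2 (Units.ne_zero _)
    exact this (by exact_mod_cast h')
  · exact h2 h'

lemma alternant_pieri (N m : ℕ) (lam : Fin N → ℕ) :
    (Matrix.of fun i k : Fin N => (X k : MvPolynomial (Fin N) ℚ) ^ lam i).det *
        esymm (Fin N) ℚ m
      = ∑ S ∈ Finset.powersetCard m Finset.univ,
          (Matrix.of fun i k : Fin N =>
            (X k : MvPolynomial (Fin N) ℚ) ^ (lam i + if i ∈ S then 1 else 0)).det := by
  rw [esymm, Finset.mul_sum]
  have step1 : ∀ T ∈ Finset.powersetCard m (Finset.univ : Finset (Fin N)),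
      (Matrix.of fun i k : Fin N => (X k : MvPolynomial (Fin N) ℚ) ^ lam i).det *
          ∏ k ∈ T, X k
        = (Matrix.of fun i k : Fin N =>
            (X k : MvPolynomial (Fin N) ℚ) ^ (lam i + if k ∈ T then 1 else 0)).det := by
    intro T _
    have hv : (∏ k ∈ T, (X k : MvPolynomial (Fin N) ℚ))
        = ∏ k, (if k ∈ T then (X k : MvPolynomial (Fin N) ℚ) else 1) := by
      rw [Finset.prod_ite_mem, Finset.univ_inter]
    rw [hv, mul_comm, ← Matrix.det_mul_row (fun k => if k ∈ T then (X k :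
      MvPolynomial (Fin N) ℚ) else 1)]
    congr 1
    refine Matrix.ext fun i k => ?_
    show (if k ∈ T then (X k : MvPolynomial (Fin N) ℚ) else 1) * X k ^ lam i
      = X k ^ (lam i + if k ∈ T then 1 else 0)
    split
    · rw [pow_succ, mul_comm]
    · rw [one_mul, add_zero]
  rw [Finset.sum_congr rfl step1]
  -- reindex
  simp only [Matrix.det_apply]
  rw [Finset.sum_comm, Finset.sum_comm (s := Finset.powersetCard m Finset.univ)]
  refine Finset.sum_congr rfl fun σ _ => ?_
  rw [← Finset.smul_sum, ← Finset.smul_sum]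
  congr 1
  refine Finset.sum_nbij' (fun T => T.map σ.toEmbedding)
    (fun S => S.map σ.symm.toEmbedding) ?_ ?_ ?_ ?_ ?_
  · intro T hT
    rw [Finset.mem_powersetCard] at hT ⊢
    exact ⟨Finset.subset_univ _, by rw [Finset.card_map]; exact hT.2⟩
  · intro S hS
    rw [Finset.mem_powersetCard] at hS ⊢
    exact ⟨Finset.subset_univ _, by rw [Finset.card_map]; exact hS.2⟩
  · intro T _
    ext a
    simp [Finset.mem_map, Equiv.symm_apply_eq]
  · intro S _
    ext a
    simp [Finset.mem_map, Equiv.eq_symm_apply]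
  · intro T _
    refine Finset.prod_congr rfl fun k _ => ?_
    congr 2
    have : σ k ∈ T.map σ.toEmbedding ↔ k ∈ T := by
      simp [Finset.mem_map]
    simp only [Matrix.of_apply]
    rw [if_congr this rfl rfl]

lemma exists_adjacent {N : ℕ} (ν : Fin N → ℕ) :
    ∀ n : ℕ, ∀ i j : Fin N, (j : ℕ) - (i : ℕ) ≤ n → i ≤ j → ν i < ν j →
      ∃ a b : Fin N, (a : ℕ) + 1 = (b : ℕ) ∧ ν a < ν b := by
  intro n
  induction n with
  | zero =>
    intro i j h1 h2 h3
    have hij : (i : ℕ) ≤ (j : ℕ) := h2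
    have : i = j := Fin.ext (by omega)
    subst this
    exact absurd h3 (lt_irrefl _)
  | succ n ih =>
    intro i j h1 h2 h3
    have hij : (i : ℕ) ≤ (j : ℕ) := h2
    have hne : (i : ℕ) ≠ (j : ℕ) := fun h => by
      exact absurd h3 (by rw [Fin.ext h]; exact lt_irrefl _)
    have hlt : (i : ℕ) + 1 ≤ (j : ℕ) := by omega
    set b : Fin N := ⟨(i : ℕ) + 1, lt_of_le_of_lt hlt j.isLt⟩ with hb
    by_cases hc : ν i < ν b
    · exact ⟨i, b, rfl, hc⟩
    · push_neg at hc
      refine ih b j (by simp [hb]; omega) (by rw [Fin.le_def]; simpa [hb] using hlt)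
        (lt_of_le_of_lt hc h3)

/-- Classical Pieri rule for `e_m`: for a partition `μ` with at most `N` parts and
`m ≤ N`, `S_μ · e_m = ∑ S_ν`, the sum over all partitions `ν` of length at most `N`
such that `ν/μ` is a vertical `m`-strip. Such `ν` are exactly those of the form
`ν i = μ i + 1` for `i` in an `m`-element subset `s` of the rows (and `ν i = μ i`
otherwise) for which `ν` is still weakly decreasing. -/
theorem stmt7 (N m : ℕ) (hm : m ≤ N) (μ : Fin N → ℕ)
    (hμ : ∀ i j : Fin N, i ≤ j → μ j ≤ μ i) :
    schur N μ * esymm (Fin N) ℚ m =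
      ∑ s ∈ Finset.univ.filter (fun s : Finset (Fin N) =>
          s.card = m ∧ ∀ i j : Fin N, i ≤ j →
            (μ j + if j ∈ s then 1 else 0) ≤ (μ i + if i ∈ s then 1 else 0)),
        schur N (fun i => μ i + if i ∈ s then 1 else 0) := by
  refine mul_right_cancel₀ (detV_ne_zero N) ?_
  set lam : Fin N → ℕ := fun i => μ i + (N - 1 - (i : ℕ)) with hlam
  have hexp : ∀ (S : Finset (Fin N)) (i : Fin N),
      lam i + (if i ∈ S then 1 else 0) = (μ i + if i ∈ S then 1 else 0) + (N - 1 - (i : ℕ)) := by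
    intro S i
    simp only [hlam]
    omega
  have hCS : ∀ S : Finset (Fin N),
      (Matrix.of fun i k : Fin N =>
          (X k : MvPolynomial (Fin N) ℚ) ^ (lam i + if i ∈ S then 1 else 0))
        = Pmat N (fun i => μ i + if i ∈ S then 1 else 0) := by
    intro S
    refine Matrix.ext fun i k => ?_
    show (X k : MvPolynomial (Fin N) ℚ) ^ (lam i + if i ∈ S then 1 else 0)
      = X k ^ ((μ i + if i ∈ S then 1 else 0) + (N - 1 - (i : ℕ)))
    rw [hexp]
  calc schur N μ * esymm (Fin N) ℚ m * (Pmat N (fun _ => 0)).det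
      = (schur N μ * (Mmat N).det) * esymm (Fin N) ℚ m := by
        rw [det_Mmat_eq]; ring
    _ = (Matrix.of fun i k : Fin N =>
          (X k : MvPolynomial (Fin N) ℚ) ^ lam i).det * esymm (Fin N) ℚ m := by
        rw [det_step]; rfl
    _ = ∑ S ∈ Finset.powersetCard m Finset.univ,
          (Matrix.of fun i k : Fin N =>
            (X k : MvPolynomial (Fin N) ℚ) ^ (lam i + if i ∈ S then 1 else 0)).det :=
        alternant_pieri N m lam
    _ = ∑ S ∈ Finset.univ.filter (fun S : Finset (Fin N) => S.card = m),
          (Matrix.of fun i k : Fin N =>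
            (X k : MvPolynomial (Fin N) ℚ) ^ (lam i + if i ∈ S then 1 else 0)).det := by
        rw [Finset.powersetCard_eq_filter, Finset.powerset_univ]
    _ = ∑ S ∈ (Finset.univ.filter (fun S : Finset (Fin N) => S.card = m)).filter
            (fun S => ∀ i j : Fin N, i ≤ j →
              (μ j + if j ∈ S then 1 else 0) ≤ (μ i + if i ∈ S then 1 else 0)),
          (Matrix.of fun i k : Fin N =>
            (X k : MvPolynomial (Fin N) ℚ) ^ (lam i + if i ∈ S then 1 else 0)).det := by
        refine (Finset.sum_filter_of_ne fun S hS hne => ?_).symm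
        by_contra hQ
        push_neg at hQ
        obtain ⟨i, j, hij, hlt⟩ := hQ
        set ν : Fin N → ℕ := fun i => μ i + if i ∈ S then 1 else 0 with hν
        obtain ⟨a, b, hab, hba⟩ := exists_adjacent ν ((j : ℕ)) i j (by omega) hij hlt
        have hmuba : μ b ≤ μ a := hμ a b (by rw [Fin.le_def]; omega)
        have hca : (if a ∈ S then 1 else 0) = 0 ∧ (if b ∈ S then 1 else 0) = 1
            ∧ μ a = μ b := by
          have h1 : (if a ∈ S then 1 else 0) ≤ 1 := by split <;> omega
          have h2 : (if b ∈ S then 1 else 0) ≤ 1 := by split <;> omega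
          simp only [hν] at hba
          omega
        refine hne (Matrix.det_zero_of_row_eq (i := a) (j := b) ?_ ?_)
        · intro h
          have := congrArg Fin.val h
          omega
        · funext k
          show (X k : MvPolynomial (Fin N) ℚ) ^ (lam a + if a ∈ S then 1 else 0)
            = X k ^ (lam b + if b ∈ S then 1 else 0)
          congr 1
          have hbN := b.isLt
          simp only [hlam]
          omega
    _ = ∑ S ∈ Finset.univ.filter (fun S : Finset (Fin N) =>
            S.card = m ∧ ∀ i j : Fin N, i ≤ j →
              (μ j + if j ∈ S then 1 else 0) ≤ (μ i + if i ∈ S then 1 else 0)),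
          (Matrix.of fun i k : Fin N =>
            (X k : MvPolynomial (Fin N) ℚ) ^ (lam i + if i ∈ S then 1 else 0)).det := by
        rw [Finset.filter_filter]
    _ = ∑ S ∈ Finset.univ.filter (fun S : Finset (Fin N) =>
            S.card = m ∧ ∀ i j : Fin N, i ≤ j →
              (μ j + if j ∈ S then 1 else 0) ≤ (μ i + if i ∈ S then 1 else 0)),
          schur N (fun i => μ i + if i ∈ S then 1 else 0) * (Pmat N (fun _ => 0)).det := by
        refine Finset.sum_congr rfl fun S _ => ?_
        rw [hCS S, ← det_Mmat_eq, det_step]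
    _ = (∑ S ∈ Finset.univ.filter (fun S : Finset (Fin N) =>
            S.card = m ∧ ∀ i j : Fin N, i ≤ j →
              (μ j + if j ∈ S then 1 else 0) ≤ (μ i + if i ∈ S then 1 else 0)),
          schur N (fun i => μ i + if i ∈ S then 1 else 0)) * (Pmat N (fun _ => 0)).det := by
        rw [Finset.sum_mul]
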